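/- Let n ≥ 2 be an integer, let D ⊆ ℝⁿ be a domain (nonempty open connected set), let x0 ∈ ∂D, and let Q : ℝⁿ → [0,∞] be a Lebesgue measurable function with Q(x) = 0 for x ∉ D, such that for some constant 0 < C < ∞ one has limsup_{ε→0⁺} (1/(Ωₙ·εⁿ)) · ∫_{B(x0,ε)∩D} Q(x) dm(x) ≤ C. Then there exist ε0′ > 0 and ε1 ∈ (0, ε0′) such that for every ε ∈ (0, ε1) one has ∫_{{x : ε < |x−x0| < ε0′}} Q(x)/|x−x0|ⁿ dm(x) ≤ (C·Ωₙ·2ⁿ/log 2)·log(1/ε). -/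

import Mathlib

open MeasureTheory Metric Filter Set
open scoped ENNReal NNReal
open intervalIntegral

private lemma aux_two_mul_nat_le_two_pow (n : ℕ) (hn : 2 ≤ n) : (2 * n : ℝ) ≤ 2 ^ n := by
  have hnat : 2 * n ≤ 2 ^ n := by
    obtain ⟨m, rfl⟩ : ∃ m, n = m + 1 := ⟨n - 1, by omega⟩
    have h1 : m + 1 ≤ 2 ^ m := Nat.lt_two_pow_self
    calc 2 * (m + 1) ≤ 2 * 2 ^ m := Nat.mul_le_mul_left 2 h1
      _ = 2 ^ (m + 1) := (pow_succ' 2 m).symm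
  calc (2 * n : ℝ) = ((2 * n : ℕ) : ℝ) := by push_cast; ring
    _ ≤ ((2 ^ n : ℕ) : ℝ) := by exact_mod_cast hnat
    _ = 2 ^ n := by push_cast; ring

private lemma aux_real_ineq (n : ℕ) (hn : 2 ≤ n) (Cw L : ℝ) (hCw : 0 ≤ Cw) (hL : 2 ≤ L) :
    2 * Cw * (1 + n * L) ≤ Cw * 2 ^ n / Real.log 2 * L := by
  have hlog : 0 < Real.log 2 := Real.log_pos one_lt_two
  have hlog7 : Real.log 2 ≤ 0.7 := by
    have := Real.log_two_lt_d9
    linarith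
  have hn' : (2 : ℝ) ≤ (n : ℝ) := by exact_mod_cast hn
  have h2n : (2 * (n : ℝ) + 1) * Real.log 2 ≤ 2 ^ n := by
    have h1 : (2 * (n : ℝ) + 1) * Real.log 2 ≤ (2 * (n : ℝ) + 1) * 0.7 := by
      apply mul_le_mul_of_nonneg_left hlog7
      linarith
    have h2 : (2 * (n : ℝ) + 1) * 0.7 ≤ 2 * (n : ℝ) := by nlinarith
    linarith [aux_two_mul_nat_le_two_pow n hn]
  have key : (2 * (n : ℝ) + 1) ≤ 2 ^ n / Real.log 2 := by
    rw [le_div_iff₀ hlog]; exact h2n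
  have hL0 : (0 : ℝ) ≤ L := by linarith
  have step : Cw * (2 * (n : ℝ) + 1) * L ≤ Cw * (2 ^ n / Real.log 2) * L := by
    apply mul_le_mul_of_nonneg_right _ hL0
    exact mul_le_mul_of_nonneg_left key hCw
  have step2 : 2 * Cw * (1 + n * L) ≤ Cw * (2 * (n : ℝ) + 1) * L := by nlinarith
  calc 2 * Cw * (1 + n * L) ≤ Cw * (2 * (n : ℝ) + 1) * L := step2
    _ ≤ Cw * (2 ^ n / Real.log 2) * L := step
    _ = Cw * 2 ^ n / Real.log 2 * L := by ring

/-- If `D ⊆ ℝⁿ` is a domain, `x₀ ∈ ∂D`, and `Q ≥ 0` (vanishing off `D`) has integral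
means over `B(x₀, ε) ∩ D` bounded by `C`, then
`∫_{ε<|x-x₀|<ε₀'} Q(x)/|x-x₀|ⁿ dm(x) ≤ (C Ωₙ 2ⁿ / log 2) · log(1/ε)` for all small `ε`. -/
theorem averages_over_rings_estimate_of_domain
    (n : ℕ) (hn : 2 ≤ n)
    (D : Set (EuclideanSpace ℝ (Fin n))) (hD_ne : D.Nonempty)
    (hD_open : IsOpen D) (hD_conn : IsConnected D)
    (x0 : EuclideanSpace ℝ (Fin n)) (hx0 : x0 ∈ frontier D)
    (Q : EuclideanSpace ℝ (Fin n) → ℝ≥0∞) (hQ : Measurable Q)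
    (hQ_zero : ∀ x ∉ D, Q x = 0)
    (C : ℝ) (hC : 0 < C)
    (hlimsup :
      Filter.limsup
        (fun ε : ℝ =>
          (1 : ℝ≥0∞) /
              (volume (ball (0 : EuclideanSpace ℝ (Fin n)) 1) * ENNReal.ofReal (ε ^ n)) *
            ∫⁻ x in ball x0 ε ∩ D, Q x)
        (nhdsWithin (0 : ℝ) (Set.Ioi 0)) ≤ ENNReal.ofReal C) :
    ∃ ε0' > (0 : ℝ), ∃ ε1 ∈ Set.Ioo (0 : ℝ) ε0', ∀ ε ∈ Set.Ioo (0 : ℝ) ε1,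
      ∫⁻ x in {x : EuclideanSpace ℝ (Fin n) | ε < dist x x0 ∧ dist x x0 < ε0'},
          Q x / ENNReal.ofReal ((dist x x0) ^ n) ≤
        ENNReal.ofReal
          (C * (volume (ball (0 : EuclideanSpace ℝ (Fin n)) 1)).toReal * 2 ^ n /
              Real.log 2 * Real.log (1 / ε)) := by
  have hn0 : n ≠ 0 := by omega
  set Ω : ℝ≥0∞ := volume (ball (0 : EuclideanSpace ℝ (Fin n)) 1) with hΩdef
  have hΩ_ne_top : Ω ≠ ⊤ := measure_ball_lt_top.ne
  have hΩ_ne_zero : Ω ≠ 0 := (measure_ball_pos volume 0 one_pos).ne'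
  have hDm : MeasurableSet D := hD_open.measurableSet
  -- eventual bound from the limsup hypothesis
  have hev : ∀ᶠ ε in nhdsWithin (0 : ℝ) (Ioi 0),
      (1 : ℝ≥0∞) / (Ω * ENNReal.ofReal (ε ^ n)) * ∫⁻ x in ball x0 ε ∩ D, Q x
        < ENNReal.ofReal (2 * C) := by
    have hlt := lt_of_le_of_lt hlimsup
      (by rw [ENNReal.ofReal_lt_ofReal_iff (by linarith : (0:ℝ) < 2 * C)]; linarith)
    exact eventually_lt_of_limsup_lt hlt
  rw [eventually_nhdsWithin_iff] at hev
  obtain ⟨δ, hδpos, hδ⟩ := Metric.eventually_nhds_iff.mp hev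
  -- bound on the integral over balls
  have hball : ∀ r : ℝ, 0 < r → r < δ →
      ∫⁻ x in ball x0 r, Q x ≤ ENNReal.ofReal (2 * C) * Ω * ENNReal.ofReal (r ^ n) := by
    intro r hr hrδ
    have h1 : (1 : ℝ≥0∞) / (Ω * ENNReal.ofReal (r ^ n)) * ∫⁻ x in ball x0 r ∩ D, Q x
        < ENNReal.ofReal (2 * C) := by
      apply hδ _ hr
      simpa [Real.dist_eq, abs_of_pos hr] using hrδ
    have hz : ∫⁻ x in ball x0 r \ D, Q x = 0 := by
      have h0 : ∫⁻ x in ball x0 r \ D, Q x = ∫⁻ x in ball x0 r \ D, (0 : ℝ≥0∞) := by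
        apply setLIntegral_congr_fun (measurableSet_ball.diff hDm)
        intro x hx; exact hQ_zero x hx.2
      simpa using h0
    have hsplit : ∫⁻ x in ball x0 r, Q x = ∫⁻ x in ball x0 r ∩ D, Q x := by
      rw [← lintegral_inter_add_diff Q (ball x0 r) hDm, hz, add_zero]
    have hne : Ω * ENNReal.ofReal (r ^ n) ≠ 0 := by
      simp only [ne_eq, mul_eq_zero, not_or]
      exact ⟨hΩ_ne_zero, by simp [ENNReal.ofReal_eq_zero, not_le, pow_pos hr]⟩
    have hnt : Ω * ENNReal.ofReal (r ^ n) ≠ ⊤ :=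
      ENNReal.mul_ne_top hΩ_ne_top ENNReal.ofReal_ne_top
    rw [one_div, ← ENNReal.div_eq_inv_mul] at h1
    calc ∫⁻ x in ball x0 r, Q x = ∫⁻ x in ball x0 r ∩ D, Q x := hsplit
      _ ≤ ENNReal.ofReal (2 * C) * (Ω * ENNReal.ofReal (r ^ n)) :=
          (ENNReal.div_le_iff hne hnt).mp h1.le
      _ = ENNReal.ofReal (2 * C) * Ω * ENNReal.ofReal (r ^ n) := by rw [mul_assoc]
  -- choice of ε0' and ε1
  set ε0' : ℝ := min δ 1 / 2 with hε0'def
  have hε0'pos : 0 < ε0' := by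
    have : 0 < min δ 1 := lt_min hδpos one_pos
    positivity
  have hε0'δ : ε0' < δ := by
    have h1 : min δ 1 ≤ δ := min_le_left _ _
    have : min δ 1 / 2 < min δ 1 := by
      have : 0 < min δ 1 := lt_min hδpos one_pos
      linarith
    linarith
  have hε0'1 : ε0' ≤ 1 := by
    have h1 : min δ 1 ≤ 1 := min_le_right _ _
    have h2 : 0 < min δ 1 := lt_min hδpos one_pos
    rw [hε0'def]; linarith
  refine ⟨ε0', hε0'pos, ?_⟩
  set ε1 : ℝ := min ε0' (Real.exp (-2)) / 2 with hε1def
  have hε1pos : 0 < ε1 := by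
    have : 0 < min ε0' (Real.exp (-2)) := lt_min hε0'pos (Real.exp_pos _)
    positivity
  have hε1lt : ε1 < ε0' := by
    have h1 : min ε0' (Real.exp (-2)) ≤ ε0' := min_le_left _ _
    have h2 : 0 < min ε0' (Real.exp (-2)) := lt_min hε0'pos (Real.exp_pos _)
    rw [hε1def]; linarith
  refine ⟨ε1, ⟨hε1pos, hε1lt⟩, ?_⟩
  rintro ε ⟨hεpos, hεlt⟩
  -- basic facts about ε
  have hεε0' : ε < ε0' := hεlt.trans hε1lt
  have hεexp : ε < Real.exp (-2) := by
    have h1 : min ε0' (Real.exp (-2)) ≤ Real.exp (-2) := min_le_right _ _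
    have h2 : 0 < min ε0' (Real.exp (-2)) := lt_min hε0'pos (Real.exp_pos _)
    calc ε < ε1 := hεlt
      _ ≤ min ε0' (Real.exp (-2)) := by rw [hε1def]; linarith
      _ ≤ Real.exp (-2) := h1
  set L : ℝ := Real.log (1 / ε) with hLdef
  have hL2 : 2 ≤ L := by
    have h1 : Real.exp 2 < 1 / ε := by
      rw [lt_div_iff₀ hεpos]
      calc Real.exp 2 * ε < Real.exp 2 * Real.exp (-2) := by
            apply mul_lt_mul_of_pos_left hεexp (Real.exp_pos _)
        _ = 1 := by rw [← Real.exp_add]; norm_num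
    calc (2 : ℝ) = Real.log (Real.exp 2) := (Real.log_exp 2).symm
      _ ≤ L := Real.log_le_log (Real.exp_pos _) h1.le
  -- setup
  set S : Set (EuclideanSpace ℝ (Fin n)) :=
    {x | ε < dist x x0 ∧ dist x x0 < ε0'} with hSdef
  have hcont : Continuous fun x : EuclideanSpace ℝ (Fin n) => dist x x0 :=
    continuous_id.dist continuous_const
  have hSm : MeasurableSet S := by
    have : S = (fun x => dist x x0) ⁻¹' Ioo ε ε0' := rfl
    rw [this]
    exact hcont.measurable measurableSet_Ioo
  set f : EuclideanSpace ℝ (Fin n) → ℝ := fun x => (dist x x0 ^ n)⁻¹ with hfdef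
  have hfm : Measurable f := (hcont.measurable.pow_const n).inv
  set ν : Measure (EuclideanSpace ℝ (Fin n)) := (volume.restrict S).withDensity Q with hνdef
  set M : ℝ≥0∞ := ENNReal.ofReal (2 * C) * Ω with hMdef
  have hM_ne_top : M ≠ ⊤ := ENNReal.mul_ne_top ENNReal.ofReal_ne_top hΩ_ne_top
  -- rewrite the integral
  have step1 : ∫⁻ x in S, Q x / ENNReal.ofReal ((dist x x0) ^ n)
      = ∫⁻ x, ENNReal.ofReal (f x) ∂ν := by
    rw [hνdef, lintegral_withDensity_eq_lintegral_mul _ hQ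
      hfm.ennreal_ofReal]
    refine setLIntegral_congr_fun hSm ?_
    intro x hx
    have hd : 0 < dist x x0 ^ n := pow_pos (hεpos.trans hx.1) n
    simp only [Pi.mul_apply, Function.comp]
    rw [ENNReal.ofReal_inv_of_pos hd, div_eq_mul_inv]
  -- ν is a finite measure
  have hν_apply : ∀ t : ℝ, ν {x | t < f x} = ∫⁻ x in {x | t < f x} ∩ S, Q x := by
    intro t
    have hEm : MeasurableSet {x | t < f x} := hfm measurableSet_Ioi
    rw [hνdef, withDensity_apply _ hEm, Measure.restrict_restrict hEm]
  have hSsub : S ⊆ ball x0 ε0' := fun x hx => mem_ball.mpr hx.2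
  have hν_univ : ν univ ≤ M * ENNReal.ofReal (ε0' ^ n) := by
    have h1 : ν univ = ∫⁻ x in S, Q x := by
      rw [hνdef, withDensity_apply _ MeasurableSet.univ, Measure.restrict_restrict
        MeasurableSet.univ, univ_inter]
    rw [h1, hMdef]
    calc ∫⁻ x in S, Q x ≤ ∫⁻ x in ball x0 ε0', Q x := lintegral_mono_set hSsub
      _ ≤ ENNReal.ofReal (2 * C) * Ω * ENNReal.ofReal (ε0' ^ n) := hball ε0' hε0'pos hε0'δ
  haveI : IsFiniteMeasure ν := by
    constructor
    calc ν univ ≤ M * ENNReal.ofReal (ε0' ^ n) := hν_univ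
      _ < ⊤ := ENNReal.mul_lt_top hM_ne_top.lt_top ENNReal.ofReal_lt_top
  -- layer cake
  have step2 : ∫⁻ x, ENNReal.ofReal (f x) ∂ν = ∫⁻ t in Ioi (0 : ℝ), ν {x | t < f x} :=
    lintegral_eq_lintegral_meas_lt ν
      (Eventually.of_forall fun x => inv_nonneg.mpr (pow_nonneg dist_nonneg n))
      hfm.aemeasurable
  -- the superlevel sets are inside balls
  have hE_sub : ∀ t : ℝ, 0 < t →
      {x | t < f x} ⊆ ball x0 (t⁻¹ ^ ((n : ℝ)⁻¹)) := by
    intro t ht x hx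
    have hx' : t < (dist x x0 ^ n)⁻¹ := hx
    have hdpos : 0 < dist x x0 ^ n := by
      rcases lt_or_eq_of_le (pow_nonneg dist_nonneg n : (0:ℝ) ≤ dist x x0 ^ n) with h | h
      · exact h
      · exfalso; rw [← h] at hx'; simp at hx'; linarith
    have h2 : dist x x0 ^ n < t⁻¹ := (lt_inv_comm₀ ht hdpos).mp hx'
    rw [mem_ball]
    by_contra hcon
    push_neg at hcon
    have h3 : t⁻¹ = (t⁻¹ ^ ((n : ℝ)⁻¹)) ^ n :=
      (Real.rpow_inv_natCast_pow (inv_nonneg.mpr ht.le) hn0).symm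
    have h4 : (t⁻¹ ^ ((n : ℝ)⁻¹)) ^ n ≤ dist x x0 ^ n :=
      pow_le_pow_left₀ (Real.rpow_nonneg (inv_nonneg.mpr ht.le) _) hcon n
    linarith
  -- split the t-integral
  set a : ℝ := (ε0' ^ n)⁻¹ with hadef
  set b : ℝ := (ε ^ n)⁻¹ with hbdef
  have hapos : 0 < a := inv_pos.mpr (pow_pos hε0'pos n)
  have hbpos : 0 < b := inv_pos.mpr (pow_pos hεpos n)
  have hab : a ≤ b := by
    apply inv_anti₀ (pow_pos hεpos n)
    exact pow_le_pow_left₀ hεpos.le hεε0'.le n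
  have hsplit3 : ∫⁻ t in Ioi (0 : ℝ), ν {x | t < f x}
      = (∫⁻ t in Ioc 0 a, ν {x | t < f x}) + ((∫⁻ t in Ioc a b, ν {x | t < f x})
        + ∫⁻ t in Ioi b, ν {x | t < f x}) := by
    rw [← lintegral_union measurableSet_Ioi (Ioc_disjoint_Ioi le_rfl),
      Ioc_union_Ioi_eq_Ioi hab,
      ← lintegral_union measurableSet_Ioi (Ioc_disjoint_Ioi le_rfl),
      Ioc_union_Ioi_eq_Ioi hapos.le]
  -- chunk (i)
  have chunk1 : ∫⁻ t in Ioc (0 : ℝ) a, ν {x | t < f x} ≤ M := by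
    have h1 : ∫⁻ t in Ioc (0 : ℝ) a, ν {x | t < f x}
        ≤ ∫⁻ _ in Ioc (0 : ℝ) a, M * ENNReal.ofReal (ε0' ^ n) := by
      apply setLIntegral_mono' measurableSet_Ioc
      intro t _
      exact (measure_mono (subset_univ _)).trans hν_univ
    rw [setLIntegral_const] at h1
    have h2 : volume (Ioc (0 : ℝ) a) = ENNReal.ofReal a := by
      rw [Real.volume_Ioc, sub_zero]
    rw [h2] at h1
    calc ∫⁻ t in Ioc (0 : ℝ) a, ν {x | t < f x}
        ≤ M * ENNReal.ofReal (ε0' ^ n) * ENNReal.ofReal a := h1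
      _ = M * ENNReal.ofReal (ε0' ^ n * a) := by
          rw [mul_assoc, ← ENNReal.ofReal_mul (pow_nonneg hε0'pos.le n)]
      _ = M := by
          rw [hadef, mul_inv_cancel₀ (pow_pos hε0'pos n).ne', ENNReal.ofReal_one, mul_one]
  -- chunk (ii)
  have chunk2 : ∫⁻ t in Ioc a b, ν {x | t < f x} ≤ M * ENNReal.ofReal (n * L) := by
    have hpoint : ∀ t ∈ Ioc a b, ν {x | t < f x} ≤ M * ENNReal.ofReal t⁻¹ := by
      intro t ht
      have htpos : 0 < t := hapos.trans ht.1
      set r : ℝ := t⁻¹ ^ ((n : ℝ)⁻¹) with hrdef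
      have hrpos : 0 < r := Real.rpow_pos_of_pos (inv_pos.mpr htpos) _
      have hrn : r ^ n = t⁻¹ := Real.rpow_inv_natCast_pow (inv_nonneg.mpr htpos.le) hn0
      have hrlt : r < ε0' := by
        have h1 : t⁻¹ < ε0' ^ n := by
          rw [hadef] at ht
          have := ht.1
          calc t⁻¹ < ((ε0' ^ n)⁻¹)⁻¹ := inv_strictAnti₀ hapos ht.1
            _ = ε0' ^ n := inv_inv _
        calc r = t⁻¹ ^ ((n : ℝ)⁻¹) := rfl
          _ < (ε0' ^ n) ^ ((n : ℝ)⁻¹) := by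
              apply Real.rpow_lt_rpow (inv_nonneg.mpr htpos.le) h1
              simp [Nat.pos_of_ne_zero hn0]
          _ = ε0' := Real.pow_rpow_inv_natCast hε0'pos.le hn0
      calc ν {x | t < f x} = ∫⁻ x in {x | t < f x} ∩ S, Q x := hν_apply t
        _ ≤ ∫⁻ x in ball x0 r, Q x := by
            apply lintegral_mono_set
            exact (inter_subset_left).trans (hE_sub t htpos)
        _ ≤ ENNReal.ofReal (2 * C) * Ω * ENNReal.ofReal (r ^ n) :=
            hball r hrpos (hrlt.trans hε0'δ)
        _ = M * ENNReal.ofReal t⁻¹ := by rw [hMdef, hrn]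
    have hmono : ∫⁻ t in Ioc a b, ν {x | t < f x}
        ≤ ∫⁻ t in Ioc a b, M * ENNReal.ofReal t⁻¹ :=
      setLIntegral_mono' measurableSet_Ioc hpoint
    have hconst : ∫⁻ t in Ioc a b, M * ENNReal.ofReal t⁻¹
        = M * ∫⁻ t in Ioc a b, ENNReal.ofReal t⁻¹ :=
      lintegral_const_mul M (ENNReal.measurable_ofReal.comp measurable_inv)
    have hint : IntegrableOn (fun t : ℝ => t⁻¹) (Ioc a b) volume := by
      rw [← intervalIntegrable_iff_integrableOn_Ioc_of_le hab]
      apply intervalIntegrable_inv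
      · intro x hx
        rcases hx with ⟨h1, _⟩
        rw [min_eq_left hab] at h1
        exact (hapos.trans_le h1).ne'
      · exact continuousOn_id
    have hlog_eq : ∫⁻ t in Ioc a b, ENNReal.ofReal t⁻¹ = ENNReal.ofReal (Real.log (b / a)) := by
      rw [← ofReal_integral_eq_lintegral_ofReal hint]
      · congr 1
        rw [← intervalIntegral.integral_of_le hab]
        exact integral_inv_of_pos hapos hbpos
      · filter_upwards [self_mem_ae_restrict measurableSet_Ioc] with t ht
        exact inv_nonneg.mpr (hapos.trans ht.1).le
    have hlog_le : Real.log (b / a) ≤ n * L := by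
      have hba : b / a = (ε0' / ε) ^ n := by
        rw [hadef, hbdef, inv_div_inv, ← div_pow]
      rw [hba, Real.log_pow]
      apply mul_le_mul_of_nonneg_left _ (Nat.cast_nonneg n)
      apply Real.log_le_log (by positivity)
      exact (div_le_div_iff_of_pos_right hεpos).mpr hε0'1
    calc ∫⁻ t in Ioc a b, ν {x | t < f x}
        ≤ M * ∫⁻ t in Ioc a b, ENNReal.ofReal t⁻¹ := hmono.trans hconst.le
      _ = M * ENNReal.ofReal (Real.log (b / a)) := by rw [hlog_eq]
      _ ≤ M * ENNReal.ofReal (n * L) := by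
          exact mul_le_mul_right (ENNReal.ofReal_le_ofReal hlog_le) M
  -- chunk (iii)
  have chunk3 : ∫⁻ t in Ioi b, ν {x | t < f x} = 0 := by
    have hzero : ∀ t ∈ Ioi b, ν {x | t < f x} = 0 := by
      intro t ht
      have hempty : {x | t < f x} ∩ S = (∅ : Set (EuclideanSpace ℝ (Fin n))) := by
        ext x
        simp only [mem_inter_iff, mem_setOf_eq, mem_empty_iff_false, iff_false, not_and]
        intro hxE hxS
        have hd : ε < dist x x0 := hxS.1
        have h1 : ε ^ n < dist x x0 ^ n := by
          apply pow_lt_pow_left₀ hd hεpos.le hn0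
        have h2 : f x < b := by
          rw [hfdef, hbdef]
          exact inv_strictAnti₀ (pow_pos hεpos n) h1
        have : t < f x := hxE
        have : f x < t := h2.trans ht
        linarith
      rw [hν_apply t, hempty]
      simp
    have : ∫⁻ t in Ioi b, ν {x | t < f x} = ∫⁻ _ in Ioi b, (0 : ℝ≥0∞) := by
      apply setLIntegral_congr_fun measurableSet_Ioi
      intro t ht; exact hzero t ht
    simpa using this
  -- combine
  have htotal : ∫⁻ x in S, Q x / ENNReal.ofReal ((dist x x0) ^ n)
      ≤ M * ENNReal.ofReal (1 + n * L) := by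
    rw [step1, step2, hsplit3]
    have h1 : ENNReal.ofReal (1 + n * L) = 1 + ENNReal.ofReal (n * L) := by
      rw [ENNReal.ofReal_add (by norm_num) (by positivity), ENNReal.ofReal_one]
    rw [h1, mul_add, mul_one, chunk3, add_zero]
    exact add_le_add chunk1 chunk2
  refine htotal.trans ?_
  have hMΩ : ENNReal.ofReal (2 * C * (Ω.toReal * (1 + n * L)))
      = M * ENNReal.ofReal (1 + n * L) := by
    rw [ENNReal.ofReal_mul (by linarith : (0:ℝ) ≤ 2 * C),
        ENNReal.ofReal_mul ENNReal.toReal_nonneg,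
        ENNReal.ofReal_toReal hΩ_ne_top, ← mul_assoc, hMdef]
  rw [← hMΩ]
  apply ENNReal.ofReal_le_ofReal
  have hw : 0 ≤ Ω.toReal := ENNReal.toReal_nonneg
  have := aux_real_ineq n hn (C * Ω.toReal) L (by positivity) hL2
  calc 2 * C * (Ω.toReal * (1 + n * L)) = 2 * (C * Ω.toReal) * (1 + n * L) := by ring
    _ ≤ C * Ω.toReal * 2 ^ n / Real.log 2 * L := this
    _ = C * Ω.toReal * 2 ^ n / Real.log 2 * L := rfl
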